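/- Let $f,g\in L^1(0,T)$ with $g(t)>0$ for a.e. $t\in(0,T)$. If the convolution $(f*g)(t)=0$ for a.e. $t\in(0,T)$, then $f=0$ a.e. in $(0,T)$. -/

import Mathlib

open Real MeasureTheory

open scoped FourierTransform Convolution ContDiff

namespace Stmt10Aux

open Set Filter

/-- Complex Laplace-type transform of `F`. -/
noncomputable def LC (F : ℝ → ℝ) (z : ℂ) : ℂ := ∫ x : ℝ, Complex.exp (-(z * x)) * (F x : ℂ)

lemma integrand_meas {F : ℝ → ℝ} (hF : AEStronglyMeasurable F volume) (z : ℂ) :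
    AEStronglyMeasurable (fun x : ℝ => Complex.exp (-(z * x)) * (F x : ℂ)) volume := by
  apply AEStronglyMeasurable.mul
  · exact (Complex.continuous_exp.comp
      ((continuous_const.mul Complex.continuous_ofReal).neg)).aestronglyMeasurable
  · exact Complex.continuous_ofReal.comp_aestronglyMeasurable hF

lemma norm_integrand (F : ℝ → ℝ) (z : ℂ) (x : ℝ) :
    ‖Complex.exp (-(z * x)) * (F x : ℂ)‖ = Real.exp (-(z.re * x)) * |F x| := by
  rw [norm_mul, Complex.norm_exp, Complex.norm_real, Real.norm_eq_abs]
  congr 2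
  simp [Complex.mul_re]

lemma LC_integrable {T : ℝ} {F : ℝ → ℝ} (hF : Integrable F)
    (hsF : ∀ x, x ∉ Set.Ioo 0 T → F x = 0) (z : ℂ) :
    Integrable (fun x : ℝ => Complex.exp (-(z * x)) * (F x : ℂ)) := by
  refine Integrable.mono' ((hF.abs).const_mul (Real.exp (|z.re| * |T|)))
    (integrand_meas hF.1 z) (Filter.Eventually.of_forall fun x => ?_)
  rw [norm_integrand]
  by_cases hx : x ∈ Set.Ioo 0 T
  · have hx0 : (0:ℝ) ≤ x := le_of_lt hx.1
    have hxT : x ≤ |T| := le_trans (le_of_lt hx.2) (le_abs_self T)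
    have : -(z.re * x) ≤ |z.re| * |T| := by
      have h1 : -(z.re * x) ≤ |z.re * x| := neg_le_abs _
      rw [abs_mul] at h1
      refine h1.trans ?_
      exact mul_le_mul_of_nonneg_left (le_trans (by rwa [abs_of_nonneg hx0]) (le_refl _))
        (abs_nonneg _)
    exact mul_le_mul_of_nonneg_right (Real.exp_le_exp.2 this) (abs_nonneg _)
  · rw [hsF x hx]
    simp [mul_nonneg (Real.exp_nonneg _) (abs_nonneg (0:ℝ))]

lemma LC_differentiable {T : ℝ} {F : ℝ → ℝ} (hF : Integrable F)
    (hsF : ∀ x, x ∉ Set.Ioo 0 T → F x = 0) : Differentiable ℂ (LC F) := by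
  intro z₀
  set B : ℝ := (|T| + 1) * Real.exp ((‖z₀‖ + 1) * (|T| + 1)) with hB
  have hBnn : 0 ≤ B := by positivity
  have key := hasDerivAt_integral_of_dominated_loc_of_lip
    (F := fun (z : ℂ) (x : ℝ) => Complex.exp (-(z * x)) * (F x : ℂ))
    (F' := fun x : ℝ => Complex.exp (-(z₀ * x)) * -(x:ℂ) * (F x : ℂ))
    (x₀ := z₀) (s := Metric.ball z₀ 1)
    (bound := fun x : ℝ => B * |F x|)
    (Metric.ball_mem_nhds z₀ one_pos)
    (Filter.Eventually.of_forall fun z => integrand_meas hF.1 z)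
    (LC_integrable hF hsF z₀)
    ?_ ?_ ((hF.abs).const_mul B) ?_
  · exact (key.2.congr_deriv rfl).differentiableAt
  · apply AEStronglyMeasurable.mul
    · apply AEStronglyMeasurable.mul
      · exact (Complex.continuous_exp.comp
          ((continuous_const.mul Complex.continuous_ofReal).neg)).aestronglyMeasurable
      · exact (Complex.continuous_ofReal.neg).aestronglyMeasurable
    · exact Complex.continuous_ofReal.comp_aestronglyMeasurable hF.1
  · refine Filter.Eventually.of_forall fun x => ?_
    by_cases hx : x ∈ Set.Ioo 0 T
    · apply (convex_ball z₀ 1).lipschitzOnWith_of_nnnorm_hasDerivWithin_le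
        (f' := fun z : ℂ => Complex.exp (-(z * x)) * -(x:ℂ) * (F x : ℂ))
        (fun z _ => ?_) (fun z hz => ?_)
      · have hd : HasDerivAt (fun w : ℂ => Complex.exp (-(w * x)) * (F x : ℂ))
            (Complex.exp (-(z * x)) * -(x:ℂ) * (F x : ℂ)) z := by
          simpa using (((hasDerivAt_id z).mul_const (x:ℂ)).neg.cexp).mul_const ((F x : ℂ))
        exact hd.hasDerivWithinAt
      · rw [← NNReal.coe_le_coe, coe_nnnorm, Real.coe_nnabs]
        rw [abs_of_nonneg (by positivity)]
        rw [norm_mul, norm_mul, Complex.norm_exp,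
          norm_neg, Complex.norm_real, Complex.norm_real, Real.norm_eq_abs, Real.norm_eq_abs]
        have hx0 : (0:ℝ) ≤ x := le_of_lt hx.1
        have hxT : |x| ≤ |T| + 1 := by
          rw [abs_of_nonneg hx0]
          have := le_of_lt hx.2
          have : x ≤ |T| := this.trans (le_abs_self T)
          linarith
        have hz1 : ‖z‖ ≤ ‖z₀‖ + 1 := by
          have := mem_ball_iff_norm.mp hz
          have h2 : ‖z‖ - ‖z₀‖ ≤ ‖z - z₀‖ := norm_sub_norm_le _ _
          linarith
        have hre : -( (z * (x:ℂ)).re) ≤ (‖z₀‖ + 1) * (|T| + 1) := by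
          have h1 : -((z * (x:ℂ)).re) ≤ |(z * (x:ℂ)).re| := neg_le_abs _
          have h2 : |(z * (x:ℂ)).re| ≤ ‖z * (x:ℂ)‖ := Complex.abs_re_le_norm _
          have h3 : ‖z * (x:ℂ)‖ = ‖z‖ * |x| := by
            rw [norm_mul, Complex.norm_real, Real.norm_eq_abs]
          refine h1.trans (h2.trans ?_)
          rw [h3]
          exact mul_le_mul hz1 hxT (abs_nonneg _) (by positivity)
        have hexp : Real.exp (-(z * (x:ℂ)).re) ≤ Real.exp ((‖z₀‖ + 1) * (|T| + 1)) :=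
          Real.exp_le_exp.2 hre
        calc Real.exp ((-(z * (x:ℂ))).re) * |x| * |F x|
            ≤ Real.exp ((‖z₀‖ + 1) * (|T| + 1)) * (|T| + 1) * |F x| := by
              rw [Complex.neg_re]
              refine mul_le_mul_of_nonneg_right (mul_le_mul hexp hxT (abs_nonneg _)
                (Real.exp_nonneg _)) (abs_nonneg _)
          _ = B * |F x| := by rw [hB]; ring
    · have h0 : F x = 0 := hsF x hx
      have : (fun z : ℂ => Complex.exp (-(z * x)) * (F x : ℂ)) = fun _ => 0 := by
        funext z; rw [h0]; simp
      rw [this]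
      exact fun a _ b _ => by simp
  · refine Filter.Eventually.of_forall fun x => ?_
    simpa using (((hasDerivAt_id z₀).mul_const (x:ℂ)).neg.cexp).mul_const ((F x : ℂ))

lemma LC_norm_le {T : ℝ} {F : ℝ → ℝ} (hF : Integrable F)
    (hsF : ∀ x, x ∉ Set.Ioo 0 T → F x = 0) {z : ℂ} (hz : 0 ≤ z.re) :
    ‖LC F z‖ ≤ ∫ x, |F x| := by
  refine (norm_integral_le_integral_norm _).trans ?_
  refine integral_mono_of_nonneg (Filter.Eventually.of_forall fun x => norm_nonneg _)
    hF.abs (Filter.Eventually.of_forall fun x => ?_)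
  dsimp only
  rw [norm_integrand]
  by_cases hx : x ∈ Set.Ioo 0 T
  · have : -(z.re * x) ≤ 0 := by
      have : 0 ≤ z.re * x := mul_nonneg hz (le_of_lt hx.1)
      linarith
    calc Real.exp (-(z.re * x)) * |F x| ≤ 1 * |F x| :=
          mul_le_mul_of_nonneg_right (Real.exp_le_one_iff.2 this) (abs_nonneg _)
      _ = |F x| := one_mul _
  · rw [hsF x hx]; simp

lemma exp_mul_integrable {T : ℝ} {F : ℝ → ℝ} (hF : Integrable F)
    (hsF : ∀ x, x ∉ Set.Ioo 0 T → F x = 0) (l : ℝ) :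
    Integrable (fun x : ℝ => Real.exp (-(l * x)) * F x) := by
  have := LC_integrable hF hsF (l : ℂ)
  refine Integrable.mono' ((hF.abs).const_mul (Real.exp (|l| * |T|)))
    ((Real.continuous_exp.comp (continuous_const.mul continuous_id).neg).aestronglyMeasurable.mul
      hF.1) (Filter.Eventually.of_forall fun x => ?_)
  rw [Real.norm_eq_abs, abs_mul, Real.abs_exp]
  by_cases hx : x ∈ Set.Ioo 0 T
  · have hx0 : (0:ℝ) ≤ x := le_of_lt hx.1
    have hxT : x ≤ |T| := (le_of_lt hx.2).trans (le_abs_self T)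
    have : -(l * x) ≤ |l| * |T| := by
      have h1 : -(l * x) ≤ |l * x| := neg_le_abs _
      rw [abs_mul] at h1
      exact h1.trans (mul_le_mul_of_nonneg_left (by rwa [abs_of_nonneg hx0]) (abs_nonneg _))
    exact mul_le_mul_of_nonneg_right (Real.exp_le_exp.2 this) (abs_nonneg _)
  · rw [hsF x hx]
    simp [mul_nonneg (Real.exp_nonneg _) (abs_nonneg (0:ℝ))]

lemma LC_ofReal {F : ℝ → ℝ} (l : ℝ) :
    LC F (l : ℂ) = ((∫ x : ℝ, Real.exp (-(l * x)) * F x : ℝ) : ℂ) := by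
  rw [LC]
  calc ∫ x : ℝ, Complex.exp (-((l:ℂ) * x)) * (F x : ℂ)
      = ∫ x : ℝ, ((Real.exp (-(l * x)) * F x : ℝ) : ℂ) := by
        congr 1; funext x
        rw [Complex.ofReal_mul, Complex.ofReal_exp, Complex.ofReal_neg, Complex.ofReal_mul]
    _ = ((∫ x : ℝ, Real.exp (-(l * x)) * F x : ℝ) : ℂ) := integral_ofReal

lemma conv_laplace_bound {T : ℝ} (hT : 0 < T) {F G : ℝ → ℝ}
    (hF : Integrable F) (hsF : ∀ x, x ∉ Set.Ioo 0 T → F x = 0)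
    (hG : Integrable G) (hsG : ∀ x, x ∉ Set.Ioo 0 T → G x = 0)
    (hconv : ∀ᵐ t ∂(volume.restrict (Set.Ioo 0 T)), (∫ τ : ℝ, G τ * F (t - τ)) = 0)
    {l : ℝ} (hl : 0 ≤ l) :
    |∫ x : ℝ, Real.exp (-(l * x)) * F x| * |∫ y : ℝ, Real.exp (-(l * y)) * G y|
      ≤ Real.exp (-(l * T)) * ((∫ x, |F x|) * (∫ y, |G y|)) := by
  set EF : ℝ → ℝ := fun x => Real.exp (-(l * x)) * F x with hEF
  set EG : ℝ → ℝ := fun y => Real.exp (-(l * y)) * G y with hEG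
  have hEFi : Integrable EF := exp_mul_integrable hF hsF l
  have hEGi : Integrable EG := exp_mul_integrable hG hsG l
  set L : ℝ →L[ℝ] ℝ →L[ℝ] ℝ := ContinuousLinearMap.lsmul ℝ ℝ with hLdef
  set h : ℝ → ℝ := EG ⋆[L] EF with hh
  set K : ℝ → ℝ := (fun y => |G y|) ⋆[L] (fun x => |F x|) with hK
  set cFG : ℝ → ℝ := fun t => ∫ τ : ℝ, G τ * F (t - τ) with hcFG
  have hhdef : ∀ t, h t = ∫ τ : ℝ, EG τ * EF (t - τ) := fun t => by
    simp only [hh, convolution_def, hLdef, ContinuousLinearMap.lsmul_apply, smul_eq_mul]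
  have hKdef : ∀ t, K t = ∫ τ : ℝ, |G τ| * |F (t - τ)| := fun t => by
    simp only [hK, convolution_def, hLdef, ContinuousLinearMap.lsmul_apply, smul_eq_mul]
  have hhi : Integrable h := MeasureTheory.Integrable.integrable_convolution L hEGi hEFi
  have hKi : Integrable K := MeasureTheory.Integrable.integrable_convolution L (hG.abs) (hF.abs)
  have hint : ∫ t, h t = (∫ y, EG y) * (∫ x, EF x) := by
    rw [hh, integral_convolution L hEGi hEFi]
    simp only [hLdef, ContinuousLinearMap.lsmul_apply, smul_eq_mul]
  have hKint : ∫ t, K t = (∫ y, |G y|) * (∫ x, |F x|) := by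
    rw [hK, integral_convolution L (hG.abs) (hF.abs)]
    simp only [hLdef, ContinuousLinearMap.lsmul_apply, smul_eq_mul]
  have hiden : ∀ t, h t = Real.exp (-(l * t)) * cFG t := by
    intro t
    have heq : ∀ τ : ℝ, EG τ * EF (t - τ) = Real.exp (-(l * t)) * (G τ * F (t - τ)) := by
      intro τ
      rw [hEF, hEG]
      dsimp only
      rw [mul_mul_mul_comm, ← Real.exp_add,
        show -(l * τ) + -(l * (t - τ)) = -(l * t) by ring]
    calc h t = ∫ τ : ℝ, EG τ * EF (t - τ) := hhdef t
      _ = ∫ τ : ℝ, Real.exp (-(l * t)) * (G τ * F (t - τ)) := by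
          congr 1; funext τ; exact heq τ
      _ = Real.exp (-(l * t)) * cFG t := by rw [integral_const_mul]
  have hKnn : ∀ t, 0 ≤ K t := by
    intro t
    rw [hKdef]
    refine integral_nonneg fun τ => ?_
    exact mul_nonneg (abs_nonneg _) (abs_nonneg _)
  have hcK : ∀ t, |cFG t| ≤ K t := by
    intro t
    have h1 : |cFG t| ≤ ∫ τ : ℝ, |G τ * F (t - τ)| := by
      rw [hcFG]
      simpa only [Real.norm_eq_abs] using norm_integral_le_integral_norm
        (μ := volume) (f := fun τ : ℝ => G τ * F (t - τ))
    refine h1.trans (le_of_eq ?_)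
    rw [hKdef]
    congr 1; funext τ
    rw [abs_mul]
  have hzero : ∀ t : ℝ, t ≤ 0 → h t = 0 := by
    intro t ht
    have hzz : (fun τ : ℝ => EG τ * EF (t - τ)) = fun _ => (0:ℝ) := by
      funext τ
      by_cases hτ : 0 < τ
      · have : F (t - τ) = 0 := hsF _ (by
          intro hmem
          exact absurd hmem.1 (by linarith))
        simp [hEF, this]
      · have : G τ = 0 := hsG _ (by
          intro hmem
          exact absurd hmem.1 hτ)
        simp [hEG, this]
    calc h t = ∫ τ : ℝ, EG τ * EF (t - τ) := hhdef t
      _ = 0 := by rw [hzz, integral_zero]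
  have haeT : ∀ᵐ t ∂(volume.restrict (Set.Iio T)), h t = 0 := by
    rw [ae_restrict_iff' measurableSet_Iio]
    rw [ae_restrict_iff' measurableSet_Ioo] at hconv
    filter_upwards [hconv] with t h1 h2
    rcases le_or_gt t 0 with ht | ht
    · exact hzero t ht
    · have : cFG t = 0 := h1 ⟨ht, h2⟩
      rw [hiden t, this, mul_zero]
  have hsplit : ∫ t, h t = ∫ t in Set.Ici T, h t := by
    have := integral_add_compl (measurableSet_Iio (a := T)) hhi (f := h)
    rw [compl_Iio] at this
    have h0 : ∫ x in Set.Iio T, h x = 0 := integral_eq_zero_of_ae haeT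
    rw [← this, h0, zero_add]
  have hbound : |∫ t in Set.Ici T, h t| ≤ Real.exp (-(l * T)) * ∫ t, K t := by
    calc |∫ t in Set.Ici T, h t| ≤ ∫ t in Set.Ici T, |h t| := by
          simpa only [Real.norm_eq_abs] using norm_integral_le_integral_norm
            (μ := volume.restrict (Set.Ici T)) (f := h)

      _ ≤ ∫ t in Set.Ici T, Real.exp (-(l * T)) * K t := by
          refine setIntegral_mono_on (hhi.abs.integrableOn)
            ((hKi.const_mul _).integrableOn) measurableSet_Ici fun t ht => ?_
          rw [hiden t, abs_mul, Real.abs_exp]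
          have h1 : Real.exp (-(l * t)) ≤ Real.exp (-(l * T)) := by
            apply Real.exp_le_exp.2
            have : l * T ≤ l * t := mul_le_mul_of_nonneg_left ht hl
            linarith
          exact mul_le_mul h1 (hcK t) (abs_nonneg _) (Real.exp_nonneg _)
      _ ≤ ∫ t, Real.exp (-(l * T)) * K t := by
          refine setIntegral_le_integral (hKi.const_mul _)
            (Filter.Eventually.of_forall fun t => ?_)
          exact mul_nonneg (Real.exp_nonneg _) (hKnn t)
      _ = Real.exp (-(l * T)) * ∫ t, K t := integral_const_mul _ _
  calc |∫ x : ℝ, EF x| * |∫ y : ℝ, EG y| = |∫ t, h t| := by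
        rw [hint, abs_mul, mul_comm]
    _ ≤ Real.exp (-(l * T)) * ∫ t, K t := by rw [hsplit]; exact hbound
    _ = Real.exp (-(l * T)) * ((∫ x, |F x|) * (∫ y, |G y|)) := by
        rw [hKint, mul_comm (∫ y, |G y|)]

lemma decay {T : ℝ} (hT : 0 < T) {F G : ℝ → ℝ}
    (hF : Integrable F) (hsF : ∀ x, x ∉ Set.Ioo 0 T → F x = 0)
    (hG : Integrable G) (hsG : ∀ x, x ∉ Set.Ioo 0 T → G x = 0)
    (hGpos : ∀ᵐ y ∂(volume.restrict (Set.Ioo 0 T)), 0 < G y)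
    (hconv : ∀ᵐ t ∂(volume.restrict (Set.Ioo 0 T)), (∫ τ : ℝ, G τ * F (t - τ)) = 0)
    {b : ℝ} (hb0 : 0 < b) (hbT : b < T) :
    ∀ z : ℂ, 0 ≤ z.re → ‖LC F z‖ ≤ (∫ x, |F x|) * Real.exp (-(b * z.re)) := by
  set Cf : ℝ := ∫ x, |F x| with hCf
  set Cg : ℝ := ∫ y, |G y| with hCg
  have hCfnn : 0 ≤ Cf := integral_nonneg fun x => abs_nonneg _
  have hCgnn : 0 ≤ Cg := integral_nonneg fun x => abs_nonneg _
  set δ : ℝ := T - b with hδ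
  have hδ0 : 0 < δ := by simp only [hδ]; linarith
  have hδT : δ < T := by simp only [hδ]; linarith
  set cδ : ℝ := ∫ y in Set.Ioo 0 δ, G y with hcδdef
  -- global a.e. nonnegativity of G
  have hGnn : ∀ᵐ y : ℝ, 0 ≤ G y := by
    have h1 := (ae_restrict_iff' measurableSet_Ioo).1 hGpos
    filter_upwards [h1] with y hy
    by_cases hmem : y ∈ Set.Ioo 0 T
    · exact le_of_lt (hy hmem)
    · rw [hsG y hmem]
  -- positivity of cδ
  have hcδ : 0 < cδ := by
    rw [hcδdef]
    rw [setIntegral_pos_iff_support_of_nonneg_ae (ae_restrict_of_ae hGnn) (hG.integrableOn)]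
    have hnull : volume (Set.Ioo 0 δ \ Function.support G) = 0 := by
      have h0 : volume ({y : ℝ | ¬ 0 < G y} ∩ Set.Ioo 0 T) = 0 := by
        have := hGpos
        rw [ae_iff] at this
        rwa [Measure.restrict_apply' measurableSet_Ioo] at this
      refine measure_mono_null ?_ h0
      rintro y ⟨hy1, hy2⟩
      constructor
      · simp only [Set.mem_setOf_eq]
        intro hpos
        exact hy2 (by simp [Function.mem_support]; exact ne_of_gt hpos)
      · exact ⟨hy1.1, lt_trans hy1.2 hδT⟩
    have : Function.support G ∩ Set.Ioo 0 δ = Set.Ioo 0 δ \ (Set.Ioo 0 δ \ Function.support G) := by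
      rw [Set.diff_diff_right_self, Set.inter_comm]
    rw [this, measure_diff_null hnull, Real.volume_Ioo]
    simp only [sub_zero]
    exact ENNReal.ofReal_pos.2 hδ0
  -- lower bound for the Laplace transform of G
  have hGr : ∀ l : ℝ, 0 ≤ l →
      Real.exp (-(l * δ)) * cδ ≤ ∫ y : ℝ, Real.exp (-(l * y)) * G y := by
    intro l hl
    have hint : Integrable (fun y : ℝ => Real.exp (-(l * y)) * G y) := exp_mul_integrable hG hsG l
    have step1 : Real.exp (-(l * δ)) * cδ = ∫ y in Set.Ioo 0 δ, Real.exp (-(l * δ)) * G y := by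
      rw [hcδdef, integral_const_mul]
    have step2 : (∫ y in Set.Ioo 0 δ, Real.exp (-(l * δ)) * G y)
        ≤ ∫ y in Set.Ioo 0 δ, Real.exp (-(l * y)) * G y := by
      refine integral_mono_ae ((hG.integrableOn).const_mul _) (hint.integrableOn) ?_
      filter_upwards [ae_restrict_of_ae hGnn, ae_restrict_mem measurableSet_Ioo] with y h1 h2
      have : Real.exp (-(l * δ)) ≤ Real.exp (-(l * y)) := by
        apply Real.exp_le_exp.2
        have : l * y ≤ l * δ := mul_le_mul_of_nonneg_left (le_of_lt h2.2) hl
        linarith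
      exact mul_le_mul_of_nonneg_right this h1
    have step3 : (∫ y in Set.Ioo 0 δ, Real.exp (-(l * y)) * G y)
        ≤ ∫ y : ℝ, Real.exp (-(l * y)) * G y := by
      refine setIntegral_le_integral hint ?_
      filter_upwards [hGnn] with y hy
      exact mul_nonneg (Real.exp_nonneg _) hy
    linarith [step1 ▸ step2, step3]
  -- decay of |Lf| on the nonnegative real axis
  have hLrb : ∀ l : ℝ, 0 ≤ l →
      |∫ x : ℝ, Real.exp (-(l * x)) * F x| ≤ Cf * Cg / cδ * Real.exp (-(b * l)) := by
    intro l hl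
    have hkey := conv_laplace_bound hT hF hsF hG hsG hconv hl
    have hGlow : Real.exp (-(l * δ)) * cδ ≤ |∫ y : ℝ, Real.exp (-(l * y)) * G y| :=
      (hGr l hl).trans (le_abs_self _)
    have hpos : 0 < Real.exp (-(l * δ)) * cδ := mul_pos (Real.exp_pos _) hcδ
    have h1 : |∫ x : ℝ, Real.exp (-(l * x)) * F x| * (Real.exp (-(l * δ)) * cδ)
        ≤ Real.exp (-(l * T)) * (Cf * Cg) :=
      le_trans (mul_le_mul_of_nonneg_left hGlow (abs_nonneg _)) hkey
    have heq : Cf * Cg / cδ * Real.exp (-(b * l)) * (Real.exp (-(l * δ)) * cδ)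
        = Real.exp (-(l * T)) * (Cf * Cg) := by
      rw [show Real.exp (-(l * T)) = Real.exp (-(b * l)) * Real.exp (-(l * δ)) by
        rw [← Real.exp_add]; congr 1; simp only [hδ]; ring]
      field_simp
    rw [← heq] at h1
    exact le_of_mul_le_mul_right h1 hpos
  -- Phragmen–Lindelöf
  set Φ : ℂ → ℂ := fun z => Complex.exp (b * z) * LC F z with hΦ
  have hΦnorm : ∀ z : ℂ, ‖Φ z‖ = Real.exp (b * z.re) * ‖LC F z‖ := by
    intro z
    rw [hΦ]
    simp only [norm_mul, Complex.norm_exp]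
    congr 2
    simp [Complex.mul_re]
  have hPL : ∀ z : ℂ, 0 ≤ z.re → ‖Φ z‖ ≤ Cf := by
    intro z hz
    refine PhragmenLindelof.right_half_plane_of_bounded_on_real ?_ ?_ ?_ ?_ hz
    · exact ((((Complex.differentiable_exp).comp
        ((differentiable_const _).mul differentiable_id)).mul
        (LC_differentiable hF hsF))).diffContOnCl
    · refine ⟨1, one_lt_two, b, ?_⟩
      rw [Asymptotics.isBigO_iff]
      refine ⟨Cf, ?_⟩
      rw [Filter.eventually_inf_principal]
      refine Filter.Eventually.of_forall fun z hz => ?_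
      have hz' : (0:ℝ) ≤ z.re := le_of_lt hz
      rw [hΦnorm]
      have h1 : ‖LC F z‖ ≤ Cf := LC_norm_le hF hsF hz'
      have h2 : Real.exp (b * z.re) ≤ Real.exp (b * ‖z‖) := by
        apply Real.exp_le_exp.2
        exact mul_le_mul_of_nonneg_left (Complex.re_le_norm z) (le_of_lt hb0)
      calc Real.exp (b * z.re) * ‖LC F z‖ ≤ Real.exp (b * ‖z‖) * Cf := by
            exact mul_le_mul h2 h1 (norm_nonneg _) (Real.exp_nonneg _)
        _ ≤ Cf * ‖Real.exp (b * ‖z‖ ^ (1:ℝ))‖ := by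
            rw [Real.rpow_one, Real.norm_eq_abs, Real.abs_exp, mul_comm]
    · refine Filter.isBoundedUnder_of_eventually_le (a := Cf * Cg / cδ) ?_
      filter_upwards [Filter.eventually_ge_atTop (0:ℝ)] with x hx
      have h1 : ‖LC F (x:ℂ)‖ = |∫ t : ℝ, Real.exp (-(x * t)) * F t| := by
        rw [LC_ofReal, Complex.norm_real, Real.norm_eq_abs]
      rw [hΦnorm, Complex.ofReal_re, h1]
      calc Real.exp (b * x) * |∫ t : ℝ, Real.exp (-(x * t)) * F t|
          ≤ Real.exp (b * x) * (Cf * Cg / cδ * Real.exp (-(b * x))) := by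
            refine mul_le_mul_of_nonneg_left ?_ (Real.exp_nonneg _)
            have := hLrb x hx
            simpa [mul_comm] using this
        _ = Cf * Cg / cδ := by
            rw [mul_comm (Cf * Cg / cδ), ← mul_assoc, ← Real.exp_add]
            simp
    · intro x
      rw [hΦnorm]
      have h1 : ((x:ℂ) * Complex.I).re = 0 := by simp
      rw [h1, mul_zero, Real.exp_zero, one_mul]
      exact LC_norm_le hF hsF (le_of_eq h1.symm)
  intro z hz
  have h1 := hPL z hz
  rw [hΦnorm] at h1
  have h2 : Real.exp (-(b * z.re)) * (Real.exp (b * z.re) * ‖LC F z‖)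
      ≤ Real.exp (-(b * z.re)) * Cf := mul_le_mul_of_nonneg_left h1 (Real.exp_nonneg _)
  calc ‖LC F z‖ = Real.exp (-(b * z.re)) * (Real.exp (b * z.re) * ‖LC F z‖) := by
        rw [← mul_assoc, ← Real.exp_add]
        simp
    _ ≤ Real.exp (-(b * z.re)) * Cf := h2
    _ = Cf * Real.exp (-(b * z.re)) := mul_comm _ _

lemma fourier_bound {T b b' : ℝ} {F : ℝ → ℝ} (hF : Integrable F)
    (hsF : ∀ x, x ∉ Set.Ioo 0 T → F x = 0)
    {Cf : ℝ} (hCfnn : 0 ≤ Cf)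
    (hdec : ∀ z : ℂ, 0 ≤ z.re → ‖LC F z‖ ≤ Cf * Real.exp (-(b * z.re)))
    {φ : ℝ → ℝ} (hφ : ContDiff ℝ ∞ φ) (hφc : HasCompactSupport φ)
    (hb' : tsupport φ ⊆ Set.Iic b') {σ : ℝ} (hσ : 0 ≤ σ) :
    |∫ x : ℝ, F x * φ x| ≤ Cf * Real.exp (-(b * σ)) * (π * (Real.exp (σ * b') *
      ((∫ x, |φ x|) + (σ^2 * (∫ x, |φ x|) + 2*σ*(∫ x, |deriv φ x|)
        + (∫ x, |deriv (deriv φ) x|))))) := by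
  classical
  -- basic facts about φ
  have hφd : Differentiable ℝ φ := (contDiff_infty_iff_deriv.mp hφ).1
  have hφ' : ContDiff ℝ ∞ (deriv φ) := (contDiff_infty_iff_deriv.mp hφ).2
  have hφ'd : Differentiable ℝ (deriv φ) := (contDiff_infty_iff_deriv.mp hφ').1
  have hφcont : Continuous φ := hφ.continuous
  have hφ'cont : Continuous (deriv φ) := hφ'.continuous
  have hφ''cont : Continuous (deriv (deriv φ)) := (contDiff_infty_iff_deriv.mp hφ').2.continuous
  have hcφ' : HasCompactSupport (deriv φ) := hφc.deriv
  have hcφ'' : HasCompactSupport (deriv (deriv φ)) := hcφ'.deriv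
  have hφint : Integrable φ := hφcont.integrable_of_hasCompactSupport hφc
  have hφ'int : Integrable (deriv φ) := hφ'cont.integrable_of_hasCompactSupport hcφ'
  have hφ''int : Integrable (deriv (deriv φ)) := hφ''cont.integrable_of_hasCompactSupport hcφ''
  have htsub : tsupport (deriv φ) ⊆ tsupport φ :=
    closure_minimal support_deriv_subset (isClosed_tsupport φ)
  have hvan : ∀ x, x ∉ tsupport φ → φ x = 0 ∧ deriv φ x = 0 ∧ deriv (deriv φ) x = 0 := by
    intro x hx
    refine ⟨image_eq_zero_of_notMem_tsupport hx, ?_, ?_⟩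
    · by_contra h
      exact hx (support_deriv_subset (by simpa [Function.mem_support] using h))
    · by_contra h
      exact hx (htsub (support_deriv_subset (by simpa [Function.mem_support] using h)))
  -- the exponentially tilted test function and its derivatives
  set u : ℝ → ℝ := fun x => Real.exp (σ * x) * φ x with hu
  set u1 : ℝ → ℝ := fun x => Real.exp (σ * x) * (σ * φ x + deriv φ x) with hu1
  set u2 : ℝ → ℝ := fun x =>
    Real.exp (σ * x) * (σ^2 * φ x + 2*σ*deriv φ x + deriv (deriv φ) x) with hu2
  have hE : ∀ x : ℝ, HasDerivAt (fun y => Real.exp (σ * y)) (σ * Real.exp (σ * x)) x := by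
    intro x
    have h := ((hasDerivAt_id x).const_mul σ).exp
    simpa [mul_comm] using h
  have hder1 : ∀ x, HasDerivAt u (u1 x) x := by
    intro x
    have h := (hE x).mul (hφd x).hasDerivAt
    have heq : u1 x = σ * Real.exp (σ * x) * φ x + Real.exp (σ * x) * deriv φ x := by
      simp only [hu1]; ring
    rw [heq]
    exact h
  have hder2 : ∀ x, HasDerivAt u1 (u2 x) x := by
    intro x
    have hinner : HasDerivAt (fun y => σ * φ y + deriv φ y)
        (σ * deriv φ x + deriv (deriv φ) x) x :=
      ((hφd x).hasDerivAt.const_mul σ).add (hφ'd x).hasDerivAt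
    have h := (hE x).mul hinner
    have heq : u2 x = σ * Real.exp (σ * x) * (σ * φ x + deriv φ x)
        + Real.exp (σ * x) * (σ * deriv φ x + deriv (deriv φ) x) := by
      simp only [hu2]; ring
    rw [heq]
    exact h
  have hEcont : Continuous fun x : ℝ => Real.exp (σ * x) :=
    Real.continuous_exp.comp (continuous_const.mul continuous_id)
  have hu_cont : Continuous u := hEcont.mul hφcont
  have hu1_cont : Continuous u1 := hEcont.mul ((continuous_const.mul hφcont).add hφ'cont)
  have hu2_cont : Continuous u2 := hEcont.mul
    (((continuous_const.mul hφcont).add (continuous_const.mul hφ'cont)).add hφ''cont)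
  have hcu : HasCompactSupport u := by
    refine HasCompactSupport.of_support_subset_isCompact hφc fun x hx => ?_
    have : u x ≠ 0 := hx
    have hφx : φ x ≠ 0 := by
      intro h0
      exact this (by simp [hu, h0])
    exact subset_tsupport φ hφx
  have hcu1 : HasCompactSupport u1 := by
    refine HasCompactSupport.of_support_subset_isCompact hφc fun x hx => ?_
    have hx' : u1 x ≠ 0 := hx
    by_contra hmem
    obtain ⟨h1, h2, _⟩ := hvan x hmem
    exact hx' (by simp [hu1, h1, h2])
  have hcu2 : HasCompactSupport u2 := by
    refine HasCompactSupport.of_support_subset_isCompact hφc fun x hx => ?_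
    have hx' : u2 x ≠ 0 := hx
    by_contra hmem
    obtain ⟨h1, h2, h3⟩ := hvan x hmem
    exact hx' (by simp [hu2, h1, h2, h3])
  have hu_int : Integrable u := hu_cont.integrable_of_hasCompactSupport hcu
  have hu1_int : Integrable u1 := hu1_cont.integrable_of_hasCompactSupport hcu1
  have hu2_int : Integrable u2 := hu2_cont.integrable_of_hasCompactSupport hcu2
  -- L¹ bounds for u, u2
  have hubd : ∀ x, |u x| ≤ Real.exp (σ * b') * |φ x| := by
    intro x
    by_cases hmem : x ∈ tsupport φ
    · have hxb : x ≤ b' := hb' hmem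
      have : Real.exp (σ * x) ≤ Real.exp (σ * b') :=
        Real.exp_le_exp.2 (mul_le_mul_of_nonneg_left hxb hσ)
      rw [hu]
      dsimp only
      rw [abs_mul, Real.abs_exp]
      exact mul_le_mul_of_nonneg_right this (abs_nonneg _)
    · obtain ⟨h1, _, _⟩ := hvan x hmem
      simp [hu, h1, mul_nonneg (Real.exp_nonneg _) (abs_nonneg _)]
  have hu2bd : ∀ x, |u2 x| ≤ Real.exp (σ * b')
      * (σ^2 * |φ x| + 2*σ*|deriv φ x| + |deriv (deriv φ) x|) := by
    intro x
    by_cases hmem : x ∈ tsupport φ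
    · have hxb : x ≤ b' := hb' hmem
      have hee : Real.exp (σ * x) ≤ Real.exp (σ * b') :=
        Real.exp_le_exp.2 (mul_le_mul_of_nonneg_left hxb hσ)
      rw [hu2]
      dsimp only
      rw [abs_mul, Real.abs_exp]
      have htri : |σ^2 * φ x + 2*σ*deriv φ x + deriv (deriv φ) x|
          ≤ σ^2 * |φ x| + 2*σ*|deriv φ x| + |deriv (deriv φ) x| := by
        refine (abs_add_le _ _).trans ?_
        have h1 : |σ^2 * φ x + 2*σ*deriv φ x| ≤ σ^2 * |φ x| + 2*σ*|deriv φ x| := by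
          refine (abs_add_le _ _).trans ?_
          rw [abs_mul, abs_mul, abs_of_nonneg (sq_nonneg σ),
            abs_of_nonneg (by linarith : (0:ℝ) ≤ 2*σ)]
        linarith
      refine mul_le_mul hee htri (abs_nonneg _) (Real.exp_nonneg _)
    · obtain ⟨h1, h2, h3⟩ := hvan x hmem
      simp [hu2, h1, h2, h3]
  have hA : (∫ x, |u x|) ≤ Real.exp (σ * b') * ∫ x, |φ x| := by
    calc (∫ x, |u x|) ≤ ∫ x, Real.exp (σ * b') * |φ x| :=
          integral_mono hu_int.abs (hφint.abs.const_mul _) hubd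
      _ = _ := integral_const_mul _ _
  have hB : (∫ x, |u2 x|) ≤ Real.exp (σ * b') *
      (σ^2 * (∫ x, |φ x|) + 2*σ*(∫ x, |deriv φ x|) + (∫ x, |deriv (deriv φ) x|)) := by
    have hRint : Integrable (fun x =>
        σ^2 * |φ x| + 2*σ*|deriv φ x| + |deriv (deriv φ) x|) :=
      ((hφint.abs.const_mul _).add (hφ'int.abs.const_mul _)).add hφ''int.abs
    calc (∫ x, |u2 x|) ≤ ∫ x, Real.exp (σ * b')
          * (σ^2 * |φ x| + 2*σ*|deriv φ x| + |deriv (deriv φ) x|) :=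
          integral_mono hu2_int.abs (hRint.const_mul _) hu2bd
      _ = Real.exp (σ * b') * ∫ x, σ^2 * |φ x| + 2*σ*|deriv φ x| + |deriv (deriv φ) x| :=
          integral_const_mul _ _
      _ = Real.exp (σ * b') *
          (σ^2 * (∫ x, |φ x|) + 2*σ*(∫ x, |deriv φ x|) + (∫ x, |deriv (deriv φ) x|)) := by
          have i1 : Integrable (fun x => σ^2 * |φ x|) := hφint.abs.const_mul _
          have i2 : Integrable (fun x => 2*σ * |deriv φ x|) := hφ'int.abs.const_mul _
          have e1 : (∫ x, σ^2 * |φ x| + 2*σ*|deriv φ x| + |deriv (deriv φ) x|)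
              = (∫ x, σ^2 * |φ x| + 2*σ*|deriv φ x|) + ∫ x, |deriv (deriv φ) x| :=
            integral_add (i1.add i2) hφ''int.abs
          have e2 : (∫ x, σ^2 * |φ x| + 2*σ*|deriv φ x|)
              = (∫ x, σ^2 * |φ x|) + ∫ x, 2*σ*|deriv φ x| := integral_add i1 i2
          rw [e1, e2, integral_const_mul, integral_const_mul]
  -- complex versions
  set uc : ℝ → ℂ := fun x => (u x : ℂ) with huc
  set uc1 : ℝ → ℂ := fun x => (u1 x : ℂ) with huc1
  set uc2 : ℝ → ℂ := fun x => (u2 x : ℂ) with huc2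
  have huc_int : Integrable uc := hu_int.ofReal
  have huc1_int : Integrable uc1 := hu1_int.ofReal
  have huc2_int : Integrable uc2 := hu2_int.ofReal
  have hucd : ∀ x, HasDerivAt uc (uc1 x) x := fun x => (hder1 x).ofReal_comp
  have hucd2 : ∀ x, HasDerivAt uc1 (uc2 x) x := fun x => (hder2 x).ofReal_comp
  have hderiv_uc : deriv uc = uc1 := funext fun x => (hucd x).deriv
  have hderiv_uc1 : deriv uc1 = uc2 := funext fun x => (hucd2 x).deriv
  have h𝓕1 : 𝓕 uc1 = fun ξ : ℝ => (2 * ↑π * Complex.I * ↑ξ) • 𝓕 uc ξ := by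
    rw [← hderiv_uc]
    exact Real.fourier_deriv huc_int (fun x => (hucd x).differentiableAt)
      (hderiv_uc ▸ huc1_int)
  have h𝓕2 : 𝓕 uc2 = fun ξ : ℝ => (2 * ↑π * Complex.I * ↑ξ) • 𝓕 uc1 ξ := by
    rw [← hderiv_uc1]
    exact Real.fourier_deriv huc1_int (fun x => (hucd2 x).differentiableAt)
      (hderiv_uc1 ▸ huc2_int)
  have hQgen : ∀ (w : ℝ → ℝ) (wc : ℝ → ℂ), (∀ x, wc x = (w x : ℂ)) → ∀ ξ : ℝ,
      ‖𝓕 wc ξ‖ ≤ ∫ x, |w x| := by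
    intro w wc hwc ξ
    rw [Real.fourier_eq]
    refine (norm_integral_le_integral_norm _).trans (le_of_eq ?_)
    congr 1; funext x
    rw [Circle.norm_smul, hwc, Complex.norm_real, Real.norm_eq_abs]
  have hQ1 : ∀ ξ : ℝ, ‖𝓕 uc ξ‖ ≤ ∫ x, |u x| := hQgen u uc (fun _ => rfl)
  have hnrm : ∀ ξ : ℝ, ‖(2 * (π:ℂ) * Complex.I * (ξ:ℂ))‖ = 2 * π * |ξ| := by
    intro ξ
    rw [norm_mul, norm_mul, norm_mul, Complex.norm_I, mul_one, Complex.norm_real,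
      Real.norm_eq_abs, abs_of_pos Real.pi_pos]
    norm_num
  have hQ2 : ∀ ξ : ℝ, (2 * π * |ξ|)^2 * ‖𝓕 uc ξ‖ ≤ ∫ x, |u2 x| := by
    intro ξ
    have h1 : ‖𝓕 uc2 ξ‖ ≤ ∫ x, |u2 x| := hQgen u2 uc2 (fun _ => rfl) ξ
    have h2 : ‖𝓕 uc2 ξ‖ = (2 * π * |ξ|)^2 * ‖𝓕 uc ξ‖ := by
      rw [h𝓕2]
      dsimp only
      rw [h𝓕1]
      dsimp only
      rw [norm_smul, norm_smul, hnrm]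
      ring
    rw [← h2]
    exact h1
  set S : ℝ := (∫ x, |u x|) + (∫ x, |u2 x|) with hS
  have hpt : ∀ ξ : ℝ, ‖𝓕 uc ξ‖ ≤ S * (1 + ξ^2)⁻¹ := by
    intro ξ
    have hξpos : (0:ℝ) < 1 + ξ^2 := by positivity
    have key : ‖𝓕 uc ξ‖ * (1 + ξ^2) ≤ S := by
      have h1 : ‖𝓕 uc ξ‖ ≤ ∫ x, |u x| := hQ1 ξ
      have h2 : ξ^2 * ‖𝓕 uc ξ‖ ≤ ∫ x, |u2 x| := by
        refine le_trans ?_ (hQ2 ξ)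
        have hππ : ξ^2 ≤ (2 * π * |ξ|)^2 := by
          have h4 : (2 * π * |ξ|)^2 = 4 * π^2 * ξ^2 := by
            rw [mul_pow, mul_pow, sq_abs]; ring
          have hπ2 : (9:ℝ) ≤ π^2 := by nlinarith [Real.pi_gt_three]
          rw [h4]
          nlinarith [sq_nonneg ξ, hπ2]
        exact mul_le_mul_of_nonneg_right hππ (norm_nonneg _)
      have expand : ‖𝓕 uc ξ‖ * (1 + ξ^2) = ‖𝓕 uc ξ‖ + ξ^2 * ‖𝓕 uc ξ‖ := by ring
      rw [expand, hS]
      exact add_le_add h1 h2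
    calc ‖𝓕 uc ξ‖ = ‖𝓕 uc ξ‖ * (1 + ξ^2) * (1 + ξ^2)⁻¹ := by
          rw [mul_assoc, mul_inv_cancel₀ (ne_of_gt hξpos), mul_one]
      _ ≤ S * (1 + ξ^2)⁻¹ :=
        mul_le_mul_of_nonneg_right key (inv_nonneg.2 (le_of_lt hξpos))
  have h𝓕cont : Continuous (𝓕 uc) :=
    VectorFourier.fourierIntegral_continuous Real.continuous_fourierChar
      (by exact continuous_inner) huc_int
  have h𝓕int : Integrable (𝓕 uc) := by
    refine Integrable.mono' (integrable_inv_one_add_sq.const_mul S)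
      h𝓕cont.aestronglyMeasurable (Filter.Eventually.of_forall fun ξ => hpt ξ)
  have hinv : 𝓕⁻ (𝓕 uc) = uc :=
    (Complex.continuous_ofReal.comp hu_cont).fourierInv_fourier_eq huc_int h𝓕int
  set ψ : ℝ → ℂ := fun ξ => 𝓕 uc (-ξ) with hψ
  have hψcont : Continuous ψ := h𝓕cont.comp continuous_neg
  have hψbd : ∀ ξ : ℝ, ‖ψ ξ‖ ≤ S * (1 + ξ^2)⁻¹ := by
    intro ξ
    have := hpt (-ξ)
    simpa [hψ, neg_sq] using this
  have hψint : Integrable ψ :=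
    Integrable.mono' (integrable_inv_one_add_sq.const_mul S)
      hψcont.aestronglyMeasurable (Filter.Eventually.of_forall fun ξ => hψbd ξ)
  have hψnorm : (∫ ξ, ‖ψ ξ‖) ≤ S * π := by
    calc (∫ ξ, ‖ψ ξ‖) ≤ ∫ ξ : ℝ, S * (1 + ξ^2)⁻¹ :=
          integral_mono_of_nonneg (Filter.Eventually.of_forall fun ξ => norm_nonneg _)
            (integrable_inv_one_add_sq.const_mul S)
            (Filter.Eventually.of_forall fun ξ => hψbd ξ)
      _ = S * π := by rw [integral_const_mul, integral_univ_inv_one_add_sq]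
  have h𝓕ψ : 𝓕 ψ = uc := by
    have h1 := Real.fourierInv_eq_fourier_comp_neg (𝓕 uc)
    rw [hinv] at h1
    rw [hψ]
    exact h1.symm
  -- the tilted F
  set fσ : ℝ → ℂ := fun x => ((Real.exp (-(σ * x)) * F x : ℝ) : ℂ) with hfσ
  have hfσint : Integrable fσ := (exp_mul_integrable hF hsF σ).ofReal
  have h𝓕fσ : ∀ ξ : ℝ, ‖𝓕 fσ ξ‖ ≤ Cf * Real.exp (-(b * σ)) := by
    intro ξ
    have heq : 𝓕 fσ ξ = LC F ((σ : ℂ) + ((2 * π * ξ : ℝ) : ℂ) * Complex.I) := by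
      rw [Real.fourier_eq, LC]
      congr 1; funext x
      rw [Circle.smul_def, Real.fourierChar_apply]
      have hfx : fσ x = Complex.exp (-((σ:ℂ) * (x:ℂ))) * (F x : ℂ) := by
        rw [hfσ]
        dsimp only
        rw [Complex.ofReal_mul, Complex.ofReal_exp]
        push_cast
        ring
      rw [hfx, smul_eq_mul, ← mul_assoc, ← Complex.exp_add]
      congr 2
      have hip : (inner ℝ x ξ : ℝ) = x * ξ := by simp [mul_comm]
      rw [hip]
      push_cast
      ring
    rw [heq]
    have hre : ((σ : ℂ) + ((2 * π * ξ : ℝ) : ℂ) * Complex.I).re = σ := by simp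
    have := hdec ((σ : ℂ) + ((2 * π * ξ : ℝ) : ℂ) * Complex.I) (by rw [hre]; exact hσ)
    rwa [hre] at this
  have h𝓕fσcont : Continuous (𝓕 fσ) :=
    VectorFourier.fourierIntegral_continuous Real.continuous_fourierChar
      (by exact continuous_inner) hfσint
  -- multiplication formula
  have hflip : (innerₗ ℝ).flip = innerₗ ℝ := by
    apply LinearMap.ext; intro x; apply LinearMap.ext; intro y
    simp [real_inner_comm]
  have key := VectorFourier.integral_fourierIntegral_smul_eq_flip (L := innerₗ ℝ)
    Real.continuous_fourierChar (by exact continuous_inner) hfσint hψint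
  rw [hflip] at key
  have hkey2 : (∫ ξ, (𝓕 fσ ξ) • ψ ξ) = ∫ x, fσ x • uc x := by
    have h2 : (fun x => fσ x • (𝓕 ψ) x) = fun x => fσ x • uc x := by rw [h𝓕ψ]
    calc (∫ ξ, (𝓕 fσ ξ) • ψ ξ) = ∫ x, fσ x • (𝓕 ψ) x := key
      _ = ∫ x, fσ x • uc x := by rw [h2]
  have hJ : (∫ x, fσ x • uc x) = ((∫ x, F x * φ x : ℝ) : ℂ) := by
    calc (∫ x, fσ x • uc x) = ∫ x : ℝ, ((F x * φ x : ℝ) : ℂ) := by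
          congr 1; funext x
          rw [smul_eq_mul, hfσ, huc, hu]
          dsimp only
          rw [← Complex.ofReal_mul]
          congr 1
          rw [mul_mul_mul_comm, ← Real.exp_add, neg_add_cancel, Real.exp_zero, one_mul]
      _ = ((∫ x, F x * φ x : ℝ) : ℂ) := integral_ofReal
  -- final estimate
  have hfinal : ‖∫ ξ, (𝓕 fσ ξ) • ψ ξ‖ ≤ Cf * Real.exp (-(b * σ)) * (S * π) := by
    refine (norm_integral_le_integral_norm _).trans ?_
    have hbd : ∀ ξ : ℝ, ‖(𝓕 fσ ξ) • ψ ξ‖ ≤ (Cf * Real.exp (-(b * σ))) * ‖ψ ξ‖ := by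
      intro ξ
      rw [norm_smul]
      exact mul_le_mul_of_nonneg_right (h𝓕fσ ξ) (norm_nonneg _)
    calc (∫ ξ, ‖(𝓕 fσ ξ) • ψ ξ‖) ≤ ∫ ξ, (Cf * Real.exp (-(b * σ))) * ‖ψ ξ‖ :=
          integral_mono_of_nonneg (Filter.Eventually.of_forall fun ξ => norm_nonneg _)
            (hψint.norm.const_mul _) (Filter.Eventually.of_forall hbd)
      _ = (Cf * Real.exp (-(b * σ))) * ∫ ξ, ‖ψ ξ‖ := integral_const_mul _ _
      _ ≤ Cf * Real.exp (-(b * σ)) * (S * π) := by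
          refine mul_le_mul_of_nonneg_left hψnorm ?_
          exact mul_nonneg hCfnn (Real.exp_nonneg _)
  have habs : |∫ x : ℝ, F x * φ x| = ‖∫ ξ, (𝓕 fσ ξ) • ψ ξ‖ := by
    rw [hkey2, hJ, Complex.norm_real, Real.norm_eq_abs]
  rw [habs]
  refine hfinal.trans ?_
  have hSbound : S * π ≤ π * (Real.exp (σ * b') *
      ((∫ x, |φ x|) + (σ^2 * (∫ x, |φ x|) + 2*σ*(∫ x, |deriv φ x|)
        + (∫ x, |deriv (deriv φ) x|)))) := by
    rw [mul_comm S π]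
    refine mul_le_mul_of_nonneg_left ?_ (le_of_lt Real.pi_pos)
    rw [hS]
    calc (∫ x, |u x|) + (∫ x, |u2 x|)
        ≤ Real.exp (σ * b') * (∫ x, |φ x|) + Real.exp (σ * b') *
          (σ^2 * (∫ x, |φ x|) + 2*σ*(∫ x, |deriv φ x|) + (∫ x, |deriv (deriv φ) x|)) :=
          add_le_add hA hB
      _ = _ := by ring
  exact mul_le_mul_of_nonneg_left hSbound (mul_nonneg hCfnn (Real.exp_nonneg _))

end Stmt10Aux

theorem stmt10 (T : ℝ) (hT : 0 < T) (f g : ℝ → ℝ)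
    (hf : IntegrableOn f (Set.Ioo 0 T)) (hg : IntegrableOn g (Set.Ioo 0 T))
    (hgpos : ∀ᵐ t ∂(volume.restrict (Set.Ioo 0 T)), 0 < g t)
    (hconv : ∀ᵐ t ∂(volume.restrict (Set.Ioo 0 T)),
      (∫ τ in Set.Ioo 0 t, f (t - τ) * g τ) = 0) :
    ∀ᵐ t ∂(volume.restrict (Set.Ioo 0 T)), f t = 0 := by
  classical
  set F : ℝ → ℝ := (Set.Ioo 0 T).indicator f with hFdef
  set G : ℝ → ℝ := (Set.Ioo 0 T).indicator g with hGdef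
  have hFi : Integrable F := (integrable_indicator_iff measurableSet_Ioo).2 hf
  have hGi : Integrable G := (integrable_indicator_iff measurableSet_Ioo).2 hg
  have hsF : ∀ x, x ∉ Set.Ioo 0 T → F x = 0 := fun x hx => Set.indicator_of_notMem hx f
  have hsG : ∀ x, x ∉ Set.Ioo 0 T → G x = 0 := fun x hx => Set.indicator_of_notMem hx g
  have hGpos' : ∀ᵐ y ∂(volume.restrict (Set.Ioo 0 T)), 0 < G y := by
    filter_upwards [hgpos, ae_restrict_mem measurableSet_Ioo] with y h1 h2
    rw [hGdef, Set.indicator_of_mem h2]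
    exact h1
  have hconv2 : ∀ᵐ t ∂(volume.restrict (Set.Ioo 0 T)),
      (∫ τ : ℝ, G τ * F (t - τ)) = 0 := by
    filter_upwards [hconv, ae_restrict_mem measurableSet_Ioo] with t h1 h2
    have hptw : (fun τ : ℝ => G τ * F (t - τ))
        = (Set.Ioo 0 t).indicator (fun τ => f (t - τ) * g τ) := by
      funext τ
      by_cases hτ : τ ∈ Set.Ioo 0 t
      · rw [Set.indicator_of_mem hτ]
        have hτT : τ ∈ Set.Ioo 0 T := ⟨hτ.1, lt_trans hτ.2 h2.2⟩
        have htτ : t - τ ∈ Set.Ioo 0 T := ⟨by linarith [hτ.2], by linarith [hτ.1, h2.2]⟩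
        rw [hGdef, hFdef, Set.indicator_of_mem hτT, Set.indicator_of_mem htτ, mul_comm]
      · rw [Set.indicator_of_notMem hτ]
        by_cases h0 : 0 < τ
        · have hts : ¬ τ < t := fun hlt => hτ ⟨h0, hlt⟩
          have hF0 : F (t - τ) = 0 := hsF _ (fun hmem => absurd hmem.1 (by
            have := not_lt.1 hts
            linarith))
          rw [hF0, mul_zero]
        · have hG0 : G τ = 0 := hsG _ (fun hmem => absurd hmem.1 h0)
          rw [hG0, zero_mul]
    rw [hptw, integral_indicator measurableSet_Ioo]
    exact h1
  have hloc : LocallyIntegrableOn f (Set.Ioo 0 T) volume := hf.locallyIntegrableOn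
  have hmain : ∀ᵐ x ∂(volume : Measure ℝ), x ∈ Set.Ioo 0 T → f x = 0 := by
    refine IsOpen.ae_eq_zero_of_integral_contDiff_smul_eq_zero isOpen_Ioo hloc ?_
    intro φ hφsm hφcs hφsup
    have hsmul : ∀ x, φ x • f x = F x * φ x := by
      intro x
      by_cases hx : x ∈ Set.Ioo 0 T
      · rw [smul_eq_mul, hFdef, Set.indicator_of_mem hx, mul_comm]
      · have hφ0 : φ x = 0 :=
          image_eq_zero_of_notMem_tsupport (fun hmem => hx (hφsup hmem))
        rw [hφ0, zero_smul, mul_zero]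
    rw [show (∫ x, φ x • f x) = ∫ x, F x * φ x from by
      congr 1; funext x; exact hsmul x]
    by_cases hne : (tsupport φ).Nonempty
    · set b' : ℝ := sSup (tsupport φ) with hb'def
      have hb'mem : b' ∈ tsupport φ := IsCompact.sSup_mem hφcs hne
      have hb'Ioo : b' ∈ Set.Ioo 0 T := hφsup hb'mem
      have hKb' : tsupport φ ⊆ Set.Iic b' := fun x hx => le_csSup hφcs.bddAbove hx
      set b : ℝ := (b' + T)/2 with hbdef
      have hb'b : b' < b := by rw [hbdef]; linarith [hb'Ioo.2]
      have hb0 : 0 < b := by rw [hbdef]; linarith [hb'Ioo.1, hb'Ioo.2]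
      have hbT : b < T := by rw [hbdef]; linarith [hb'Ioo.2]
      set Cf : ℝ := ∫ x, |F x| with hCfdef
      have hCfnn : (0:ℝ) ≤ Cf := integral_nonneg fun _ => abs_nonneg _
      have hdec := Stmt10Aux.decay hT hFi hsF hGi hsG hGpos' hconv2 hb0 hbT
      set P0 : ℝ := ∫ x, |φ x| with hP0
      set P1 : ℝ := ∫ x, |deriv φ x| with hP1
      set P2 : ℝ := ∫ x, |deriv (deriv φ) x| with hP2
      set c : ℝ := b - b' with hcdef
      have hc : 0 < c := by rw [hcdef]; linarith
      set D : ℝ → ℝ := fun σ => Cf * Real.exp (-(b * σ)) * (π * (Real.exp (σ * b') *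
        (P0 + (σ^2 * P0 + 2*σ*P1 + P2)))) with hD
      have hbd : ∀ σ : ℝ, 0 ≤ σ → |∫ x, F x * φ x| ≤ D σ := by
        intro σ hσ
        exact Stmt10Aux.fourier_bound hFi hsF hCfnn hdec hφsm hφcs hKb' hσ
      have hDeq : ∀ σ : ℝ, D σ = (Cf * π * (P0 + P2)) * (σ ^ (0:ℝ) * Real.exp (-c * σ))
          + (Cf * π * P0) * (σ ^ (2:ℝ) * Real.exp (-c * σ))
          + (Cf * π * (2*P1)) * (σ ^ (1:ℝ) * Real.exp (-c * σ)) := by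
        intro σ
        rw [Real.rpow_zero, Real.rpow_one,
          show (2:ℝ) = ((2:ℕ):ℝ) by norm_num, Real.rpow_natCast]
        rw [show Real.exp (-c * σ) = Real.exp (-(b * σ)) * Real.exp (σ * b') by
          rw [← Real.exp_add]; congr 1; rw [hcdef]; ring]
        rw [hD]
        ring
      have hlim : Filter.Tendsto D Filter.atTop (nhds 0) := by
        have h0 := (tendsto_rpow_mul_exp_neg_mul_atTop_nhds_zero 0 c hc).const_mul
          (Cf * π * (P0 + P2))
        have h2 := (tendsto_rpow_mul_exp_neg_mul_atTop_nhds_zero 2 c hc).const_mul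
          (Cf * π * P0)
        have h1 := (tendsto_rpow_mul_exp_neg_mul_atTop_nhds_zero 1 c hc).const_mul
          (Cf * π * (2*P1))
        have hsum := (h0.add h2).add h1
        simp only [mul_zero, add_zero] at hsum
        exact Filter.Tendsto.congr (fun σ => (hDeq σ).symm) hsum
      have hJ0 : |∫ x, F x * φ x| ≤ 0 := by
        refine ge_of_tendsto hlim ?_
        filter_upwards [Filter.eventually_ge_atTop (0:ℝ)] with σ hσ
        exact hbd σ hσ
      exact abs_eq_zero.1 (le_antisymm hJ0 (abs_nonneg _))
    · have hz : ∀ x, φ x = 0 := by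
        intro x
        apply image_eq_zero_of_notMem_tsupport
        intro hx
        exact hne ⟨x, hx⟩
      have : (fun x : ℝ => F x * φ x) = fun _ => (0:ℝ) := by
        funext x; rw [hz x, mul_zero]
      rw [this, integral_zero]
  rw [ae_restrict_iff' measurableSet_Ioo]
  exact hmain
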